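/- Let H be a connected graph of order n that is not complete, with Laplacian eigenvalues μ_1(H) ≥ ... ≥ μ_n(H). Then for every integer k ≥ 1, the vertex connectivity of the lexicographic power H^k satisfies n^{k−1}·μ_{n−1}(H) ≤ υ(H^k) ≤ δ(H)·(n^k − 1)/(n − 1). -/

import Mathlib

open Matrix Finset

universe u

/-- The lexicographic product `H[G]` of two simple graphs. -/
def lexProd {α β : Type u} (H : SimpleGraph α) (G : SimpleGraph β) :
    SimpleGraph (α × β) where
  Adj x y := H.Adj x.1 y.1 ∨ (x.1 = y.1 ∧ G.Adj x.2 y.2)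
  symm := ⟨fun x y h => by
    rcases h with h | ⟨h1, h2⟩
    · exact Or.inl (H.symm.symm _ _ h)
    · exact Or.inr ⟨h1.symm, G.symm.symm _ _ h2⟩⟩
  loopless := ⟨fun x h => by
    rcases h with h | ⟨_, h2⟩
    · exact H.loopless.irrefl _ h
    · exact G.loopless.irrefl _ h2⟩

/-- Vertex type of the iterated lexicographic product `H^k[G]`. -/
def lexIterVert (α β : Type u) : ℕ → Type u
  | 0 => β
  | k + 1 => α × lexIterVert α β k

/-- Iterated lexicographic product: `H^0[G] = G`, `H^k[G] = H[H^{k-1}[G]]`. -/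
def lexIter {α β : Type u} (H : SimpleGraph α) (G : SimpleGraph β) :
    (k : ℕ) → SimpleGraph (lexIterVert α β k)
  | 0 => G
  | k + 1 => lexProd H (lexIter H G k)

instance lexIterVert.instFintype {α β : Type u} [Fintype α] [Fintype β] :
    ∀ k, Fintype (lexIterVert α β k)
  | 0 => inferInstanceAs (Fintype β)
  | k + 1 =>
      letI := lexIterVert.instFintype (α := α) (β := β) k
      inferInstanceAs (Fintype (α × lexIterVert α β k))

/-- Vertex type of the lexicographic power `H^k` (with `H^0 = K_1`). -/
def powVert (α : Type u) : ℕ → Type u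
  | 0 => PUnit
  | 1 => α
  | k + 2 => powVert α (k + 1) × α

/-- Lexicographic powers of a graph: `H^1 = H` and `H^k = H^{k-1}[H]` for `k ≥ 2`. -/
def lexPow {α : Type u} (H : SimpleGraph α) : (k : ℕ) → SimpleGraph (powVert α k)
  | 0 => ⊥
  | 1 => H
  | k + 2 => lexProd (lexPow H (k + 1)) H

instance powVert.instFintype {α : Type u} [Fintype α] : ∀ k, Fintype (powVert α k)
  | 0 => inferInstanceAs (Fintype PUnit)
  | 1 => inferInstanceAs (Fintype α)
  | k + 2 =>
      letI := powVert.instFintype (α := α) (k + 1)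
      inferInstanceAs (Fintype (powVert α (k + 1) × α))

/-- The degree of a vertex. -/
noncomputable def gdeg {α : Type u} [Fintype α] (G : SimpleGraph α) (v : α) : ℕ := by
  classical exact G.degree v

/-- The adjacency spectrum of a graph, as the multiset of roots (eigenvalues, with
multiplicity) of the characteristic polynomial of its adjacency matrix over `ℝ`. -/
noncomputable def adjSpectrum {α : Type u} [Fintype α] (G : SimpleGraph α) : Multiset ℝ := by
  classical exact (Matrix.charpoly (G.adjMatrix ℝ)).roots

/-- The Laplacian spectrum of a graph, as the multiset of roots (eigenvalues, with
multiplicity) of the characteristic polynomial of its Laplacian matrix over `ℝ`. -/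
noncomputable def lapSpectrum {α : Type u} [Fintype α] (G : SimpleGraph α) : Multiset ℝ := by
  classical exact (Matrix.charpoly (G.lapMatrix ℝ)).roots
/-- The minimum degree of a graph. -/
noncomputable def minDeg {α : Type u} [Fintype α] (G : SimpleGraph α) : ℕ :=
  sInf (Set.range fun v => gdeg G v)

/-- The vertex connectivity of a graph: the minimum number of vertices whose removal
yields a disconnected graph. -/
noncomputable def vertConn {α : Type u} [Fintype α] (G : SimpleGraph α) : ℕ :=
  sInf {r | ∃ s : Finset α, s.card = r ∧ ¬ (G.induce ((↑s : Set α)ᶜ)).Connected}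


section VC
variable {γ : Type u} [Fintype γ]

lemma vertConnSet_nonempty (G : SimpleGraph γ) :
    {r | ∃ s : Finset γ, s.card = r ∧ ¬ (G.induce ((↑s : Set γ)ᶜ)).Connected}.Nonempty := by
  refine ⟨(univ : Finset γ).card, (univ : Finset γ), rfl, fun h => ?_⟩
  rcases h.nonempty with ⟨⟨v, hv⟩⟩
  simp at hv

lemma vertConn_le_of_not_connected (G : SimpleGraph γ) (s : Finset γ)
    (h : ¬ (G.induce ((↑s : Set γ)ᶜ)).Connected) : vertConn G ≤ s.card :=
  Nat.sInf_le ⟨s, rfl, h⟩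

lemma connected_induce_of_card_lt (G : SimpleGraph γ) (s : Finset γ)
    (h : s.card < vertConn G) : (G.induce ((↑s : Set γ)ᶜ)).Connected := by
  by_contra hc
  exact absurd (vertConn_le_of_not_connected G s hc) (by omega)

lemma reachable_eq_of_no_adj {V : Type*} (G : SimpleGraph V)
    (hG : ∀ a b, ¬ G.Adj a b) {a b : V} (h : G.Reachable a b) : a = b := by
  rcases h with ⟨w⟩
  cases w with
  | nil => rfl
  | cons h _ => exact absurd h (hG _ _)

lemma exists_non_adj (G : SimpleGraph γ) (hnc : G ≠ ⊤) :
    ∃ v w : γ, v ≠ w ∧ ¬ G.Adj v w := by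
  by_contra h
  push_neg at h
  apply hnc
  ext v w
  simp only [SimpleGraph.top_adj]
  exact ⟨fun h' => h'.ne, fun hne => h v w hne⟩

lemma vertConn_le_card_sub_two (G : SimpleGraph γ) (hnc : G ≠ ⊤) :
    vertConn G ≤ Fintype.card γ - 2 := by
  obtain ⟨v, w, hvw, hadj⟩ := exists_non_adj G hnc
  classical
  have h := vertConn_le_of_not_connected G (univ \ {v, w}) ?_
  · calc vertConn G ≤ (univ \ {v, w}).card := h
      _ = Fintype.card γ - 2 := by
        rw [Finset.card_sdiff_of_subset (by simp)]
        simp [Finset.card_insert_of_notMem, hvw]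
  · intro hcon
    have hv : v ∈ (↑(univ \ ({v, w} : Finset γ)) : Set γ)ᶜ := by simp
    have hw : w ∈ (↑(univ \ ({v, w} : Finset γ)) : Set γ)ᶜ := by simp
    have := hcon.preconnected ⟨v, hv⟩ ⟨w, hw⟩
    have heq := reachable_eq_of_no_adj _ ?_ this
    · exact hvw (congrArg Subtype.val heq)
    · rintro ⟨a, ha⟩ ⟨b, hb⟩ hab
      simp only [SimpleGraph.comap_adj, Function.Embedding.coe_subtype] at hab
      simp only [Set.mem_compl_iff, Finset.coe_sdiff, Set.mem_diff, Finset.coe_univ,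
        Set.mem_univ, true_and, not_not, Finset.coe_insert, Set.mem_insert_iff,
        Finset.coe_singleton, Set.mem_singleton_iff] at ha hb
      rcases ha with rfl | rfl <;> rcases hb with rfl | rfl
      · exact G.loopless.irrefl _ hab
      · exact hadj hab
      · exact hadj hab.symm
      · exact G.loopless.irrefl _ hab

end VC

section MinDeg
variable {γ β : Type u} [Fintype γ] [Fintype β]

lemma gdeg_eq_degree (G : SimpleGraph γ) [DecidableRel G.Adj] (v : γ) :
    gdeg G v = G.degree v := by
  unfold gdeg
  congr!

lemma minDeg_le (G : SimpleGraph γ) (v : γ) : minDeg G ≤ gdeg G v :=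
  Nat.sInf_le ⟨v, rfl⟩

lemma le_minDeg [Nonempty γ] (G : SimpleGraph γ) (m : ℕ) (h : ∀ v, m ≤ gdeg G v) :
    m ≤ minDeg G := by
  refine le_csInf ⟨gdeg G (Classical.arbitrary γ), ⟨_, rfl⟩⟩ ?_
  rintro b ⟨v, rfl⟩
  exact h v

lemma exists_minDeg [Nonempty γ] (G : SimpleGraph γ) : ∃ v, gdeg G v = minDeg G := by
  have : (Set.range fun v => gdeg G v).Nonempty := ⟨gdeg G (Classical.arbitrary γ), ⟨_, rfl⟩⟩
  exact Nat.sInf_mem this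

lemma vertConn_le_minDeg (G : SimpleGraph γ) (hne : Nonempty γ) (hnc : G ≠ ⊤) :
    vertConn G ≤ minDeg G := by
  classical
  obtain ⟨v, hv⟩ := exists_minDeg G
  by_cases hex : ∃ w, w ≠ v ∧ ¬ G.Adj v w
  · obtain ⟨w, hwv, hadj⟩ := hex
    have h := vertConn_le_of_not_connected G (G.neighborFinset v) ?_
    · rwa [SimpleGraph.card_neighborFinset_eq_degree, ← gdeg_eq_degree, hv] at h
    · intro hcon
      have hv' : v ∈ (↑(G.neighborFinset v) : Set γ)ᶜ := by simp
      have hw' : w ∈ (↑(G.neighborFinset v) : Set γ)ᶜ := by simpa using hadj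
      have hreach := hcon.preconnected ⟨v, hv'⟩ ⟨w, hw'⟩
      -- v is isolated in the induced graph
      rcases hreach with ⟨p⟩
      cases p with
      | nil => exact hwv rfl
      | cons h _ =>
        rename_i u _
        have : G.Adj v ↑u := h
        have hu : ¬ G.Adj v ↑u := by
          have h2 := u.2
          simp only [Set.mem_compl_iff, Finset.mem_coe, SimpleGraph.mem_neighborFinset] at h2
          exact h2
        exact hu h
  · -- v adjacent to everything else; minDeg = card - 1
    push_neg at hex
    have hdeg : G.degree v = Fintype.card γ - 1 := by
      have : G.neighborFinset v = univ.erase v := by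
        ext u
        simp only [SimpleGraph.mem_neighborFinset, Finset.mem_erase, Finset.mem_univ, and_true]
        constructor
        · intro h; exact (G.ne_of_adj h).symm
        · intro h; exact hex u h
      rw [SimpleGraph.degree, this, Finset.card_erase_of_mem (Finset.mem_univ v),
        Finset.card_univ]
    have h2 := vertConn_le_card_sub_two G hnc
    have : minDeg G = Fintype.card γ - 1 := by rw [← hv, gdeg_eq_degree, hdeg]
    omega
end MinDeg

section LexDeg
variable {γ β : Type u} [Fintype γ] [Fintype β]

lemma gdeg_lexProd (F : SimpleGraph γ) (G : SimpleGraph β) (x : γ) (y : β) :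
    gdeg (lexProd F G) (x, y) = gdeg F x * Fintype.card β + gdeg G y := by
  classical
  have hF : DecidableRel F.Adj := Classical.decRel _
  have hG : DecidableRel G.Adj := Classical.decRel _
  have hFG : DecidableRel (lexProd F G).Adj := Classical.decRel _
  rw [gdeg_eq_degree, gdeg_eq_degree, gdeg_eq_degree]
  have hnb : (lexProd F G).neighborFinset (x, y)
      = (F.neighborFinset x) ×ˢ (univ : Finset β) ∪ ({x} : Finset γ) ×ˢ (G.neighborFinset y) := by
    ext ⟨a, b⟩
    simp only [SimpleGraph.mem_neighborFinset, Finset.mem_union, Finset.mem_product,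
      Finset.mem_univ, and_true, Finset.mem_singleton]
    constructor
    · rintro (h | ⟨h1, h2⟩)
      · exact Or.inl h
      · exact Or.inr ⟨h1.symm, h2⟩
    · rintro (h | ⟨h1, h2⟩)
      · exact Or.inl h
      · exact Or.inr ⟨h1.symm, h2⟩
  rw [SimpleGraph.degree, hnb, Finset.card_union_of_disjoint, Finset.card_product,
    Finset.card_product]
  · rw [Finset.card_univ, Finset.card_singleton, one_mul]
    rfl
  · rw [Finset.disjoint_left]
    rintro ⟨a, b⟩ hab hab'
    simp only [Finset.mem_product, SimpleGraph.mem_neighborFinset, Finset.mem_singleton] at hab hab'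
    exact F.ne_of_adj hab.1 hab'.1.symm

lemma minDeg_lexProd [Nonempty γ] [Nonempty β] (F : SimpleGraph γ) (G : SimpleGraph β) :
    minDeg (lexProd F G) = minDeg F * Fintype.card β + minDeg G := by
  obtain ⟨x0, hx0⟩ := exists_minDeg F
  obtain ⟨y0, hy0⟩ := exists_minDeg G
  apply le_antisymm
  · have := minDeg_le (lexProd F G) (x0, y0)
    rwa [gdeg_lexProd, hx0, hy0] at this
  · apply le_minDeg
    rintro ⟨x, y⟩
    rw [gdeg_lexProd]
    have h1 := minDeg_le F x
    have h2 := minDeg_le G y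
    have := Fintype.card β
    nlinarith [minDeg_le F x, minDeg_le G y]

lemma lexProd_ne_top [Nonempty β] (F : SimpleGraph γ) (G : SimpleGraph β) (hF : F ≠ ⊤) :
    lexProd F G ≠ ⊤ := by
  obtain ⟨v, w, hvw, hadj⟩ := exists_non_adj F hF
  intro h
  obtain ⟨y0⟩ := (inferInstance : Nonempty β)
  have : (lexProd F G).Adj (v, y0) (w, y0) := by
    rw [h]
    simp only [SimpleGraph.top_adj]
    exact fun hc => hvw (congrArg Prod.fst hc)
  rcases this with h' | ⟨h1, _⟩
  · exact hadj h'
  · exact hvw h1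

end LexDeg

section Pow
variable {α : Type u} [Fintype α]

lemma powVert_nonempty [Nonempty α] (k : ℕ) : Nonempty (powVert α k) := by
  induction k with
  | zero => exact ⟨PUnit.unit⟩
  | succ k ih =>
    cases k with
    | zero => exact ‹Nonempty α›
    | succ m => exact ⟨⟨ih.some, Classical.arbitrary α⟩⟩

lemma card_powVert [Nonempty α] (k : ℕ) (hk : 1 ≤ k) :
    Fintype.card (powVert α k) = Fintype.card α ^ k := by
  induction k, hk using Nat.le_induction with
  | base => simp [powVert]; rfl
  | succ k hk ih =>
    obtain ⟨m, rfl⟩ : ∃ m, k = m + 1 := ⟨k - 1, by omega⟩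
    have : Fintype.card (powVert α (m + 2)) = Fintype.card (powVert α (m + 1) × α) := rfl
    rw [this, Fintype.card_prod, ih]; ring

lemma lexPow_ne_top [Nonempty α] (H : SimpleGraph α) (hnc : H ≠ ⊤) (k : ℕ) (hk : 1 ≤ k) :
    lexPow H k ≠ ⊤ := by
  induction k, hk using Nat.le_induction with
  | base => exact hnc
  | succ k hk ih =>
    obtain ⟨m, rfl⟩ : ∃ m, k = m + 1 := ⟨k - 1, by omega⟩
    show lexProd (lexPow H (m + 1)) H ≠ ⊤
    haveI := powVert_nonempty (α := α) (m + 1)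
    exact lexProd_ne_top _ _ ih

lemma minDeg_lexPow [Nonempty α] (H : SimpleGraph α) (k : ℕ) (hk : 1 ≤ k) :
    minDeg (lexPow H k) = minDeg H * ∑ i ∈ Finset.range k, Fintype.card α ^ i := by
  induction k, hk using Nat.le_induction with
  | base => simp [lexPow]; rfl
  | succ k hk ih =>
    obtain ⟨m, rfl⟩ : ∃ m, k = m + 1 := ⟨k - 1, by omega⟩
    show minDeg (lexProd (lexPow H (m + 1)) H) = _
    haveI := powVert_nonempty (α := α) (m + 1)
    have hs : ∑ i ∈ Finset.range (m + 2), Fintype.card α ^ i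
        = (∑ i ∈ Finset.range (m + 1), Fintype.card α ^ i) * Fintype.card α + 1 := by
      rw [Finset.sum_range_succ']
      simp [pow_succ, ← Finset.sum_mul]
    rw [minDeg_lexProd, ih, hs]
    ring

lemma geom_sum_nat (n : ℕ) (hn : 2 ≤ n) (k : ℕ) :
    (n ^ k - 1) / (n - 1) = ∑ i ∈ Finset.range k, n ^ i := by
  have key : (n - 1) * ∑ i ∈ Finset.range k, n ^ i = n ^ k - 1 := by
    induction k with
    | zero => simp
    | succ k ih =>
      rw [Finset.sum_range_succ, Nat.mul_add, ih]
      have h1 : 1 ≤ n ^ k := Nat.one_le_pow _ _ (by omega)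
      have h3 : (n - 1) * n ^ k = n * n ^ k - n ^ k := by rw [Nat.sub_mul, one_mul]
      have h2 : n ^ (k + 1) = n * n ^ k := by rw [pow_succ, mul_comm]
      rw [h3, h2]
      have h4 : n ^ k ≤ n * n ^ k := Nat.le_mul_of_pos_left _ (by omega)
      omega
  rw [← key, Nat.mul_div_cancel_left _ (by omega)]

end Pow

section Conn
variable {γ β : Type u} [Fintype γ] [Fintype β]

lemma exists_adj_of_connected {V : Type*} (G : SimpleGraph V)
    (h : G.Preconnected) (a b : V) (hab : b ≠ a) : ∃ c, G.Adj a c := by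
  obtain ⟨w⟩ := h a b
  cases w with
  | nil => exact absurd rfl hab.symm
  | cons h' _ => exact ⟨_, h'⟩

lemma mul_vertConn_le_vertConn_lexProd (F : SimpleGraph γ) (G : SimpleGraph β)
    (hF : F ≠ ⊤) :
    Fintype.card β * vertConn F ≤ vertConn (lexProd F G) := by
  classical
  refine le_csInf (vertConnSet_nonempty _) ?_
  rintro r ⟨T, rfl, hT⟩
  by_contra hlt
  push_neg at hlt
  apply hT
  set m := Fintype.card β with hm'
  set S : Finset γ := univ.filter (fun x => ∀ y : β, (x, y) ∈ T) with hS
  have hsub : S ×ˢ (univ : Finset β) ⊆ T := by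
    rintro ⟨x, y⟩ hxy
    rw [Finset.mem_product] at hxy
    exact (Finset.mem_filter.mp hxy.1).2 y
  have hcardS : S.card * m ≤ T.card := by
    calc S.card * m = (S ×ˢ (univ : Finset β)).card := by
          rw [Finset.card_product, Finset.card_univ]
      _ ≤ T.card := Finset.card_le_card hsub
  have hm : 0 < m := by
    rcases Nat.eq_zero_or_pos m with h | h
    · rw [h] at hlt; omega
    · exact h
  have hSlt : S.card < vertConn F := by
    by_contra h
    push_neg at h
    have h1 : m * vertConn F ≤ m * S.card := Nat.mul_le_mul_left m h
    have h2 : m * S.card = S.card * m := Nat.mul_comm _ _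
    omega
  have hconnS : (F.induce ((↑S : Set γ)ᶜ)).Connected := connected_induce_of_card_lt F S hSlt
  have hcard2 : vertConn F ≤ Fintype.card γ - 2 := vertConn_le_card_sub_two F hF
  -- two distinct vertices outside S
  have hcompl : 1 < (univ \ S).card := by
    rw [Finset.card_sdiff_of_subset (Finset.subset_univ S), Finset.card_univ]
    have : S.card + 2 ≤ Fintype.card γ := by omega
    omega
  obtain ⟨u, hu, v, hv, huv⟩ := Finset.one_lt_card.mp hcompl
  have hu' : u ∉ S := (Finset.mem_sdiff.mp hu).2
  have hv' : v ∉ S := (Finset.mem_sdiff.mp hv).2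
  -- surviving vertices in fibers
  have hsurv : ∀ x : γ, x ∉ S → ∃ y, (x, y) ∉ T := by
    intro x hx
    by_contra h
    push_neg at h
    exact hx (Finset.mem_filter.mpr ⟨Finset.mem_univ x, h⟩)
  have hmemS : ∀ {x : γ} {y : β}, (x, y) ∉ T → x ∉ S := by
    intro x y h hx
    exact h ((Finset.mem_filter.mp hx).2 y)
  -- adjacency lifting
  have hadjlift : ∀ {x x' : γ} {y y' : β} (hx : (x, y) ∉ T) (hx' : (x', y') ∉ T),
      F.Adj x x' →
      ((lexProd F G).induce ((↑T : Set (γ × β))ᶜ)).Adj ⟨(x, y), by simpa using hx⟩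
        ⟨(x', y'), by simpa using hx'⟩ := by
    intro x x' y y' hx hx' hadj
    simp only [SimpleGraph.comap_adj, Function.Embedding.coe_subtype]
    exact Or.inl hadj
  -- neighbor in F−S for every vertex of F−S
  have hnbr : ∀ a : ((↑S : Set γ)ᶜ : Set γ), ∃ c, (F.induce ((↑S : Set γ)ᶜ)).Adj a c := by
    intro a
    have hex : ∃ t : γ, t ∉ S ∧ t ≠ ↑a := by
      by_cases h : u = ↑a
      · refine ⟨v, hv', fun hc => huv ?_⟩
        rw [h, hc]
      · exact ⟨u, hu', h⟩
    obtain ⟨t, htS, hta⟩ := hex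
    exact exists_adj_of_connected _ hconnS.preconnected a ⟨t, by simpa using htS⟩
      (fun hc => hta (congrArg Subtype.val hc))
  -- key walk-induction claim
  have key : ∀ (a b : ((↑S : Set γ)ᶜ : Set γ)) (w : (F.induce ((↑S : Set γ)ᶜ)).Walk a b)
      (ya yb : β) (ha : ((a : γ), ya) ∉ T) (hb : ((b : γ), yb) ∉ T),
      ((lexProd F G).induce ((↑T : Set (γ × β))ᶜ)).Reachable ⟨((a : γ), ya), by simpa using ha⟩
        ⟨((b : γ), yb), by simpa using hb⟩ := by
    intro a b w
    induction w with
    | nil =>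
      intro ya yb ha hb
      rename_i a'
      by_cases hy : ya = yb
      · subst hy; exact SimpleGraph.Reachable.refl _
      · obtain ⟨c, hc⟩ := hnbr a'
        have hcS : (c : γ) ∉ S := by
          have h2 := c.2
          simp only [Set.mem_compl_iff, Finset.mem_coe] at h2
          exact h2
        obtain ⟨yc, hyc⟩ := hsurv _ hcS
        have hcadj : F.Adj ↑a' ↑c := hc
        have h1 := hadjlift ha hyc hcadj
        have h2 := hadjlift hyc hb hcadj.symm
        exact h1.reachable.trans h2.reachable
    | cons h p ih =>
      intro ya yb ha hb
      rename_i a' c' b'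
      have hcS : (c' : γ) ∉ S := by
        have h2 := c'.2
        simp only [Set.mem_compl_iff, Finset.mem_coe] at h2
        exact h2
      obtain ⟨yc, hyc⟩ := hsurv _ hcS
      have hcadj : F.Adj ↑a' ↑c' := h
      exact ((hadjlift ha hyc hcadj).reachable).trans (ih yc yb hyc hb)
  -- conclude connectivity
  rw [SimpleGraph.connected_iff]
  constructor
  · rintro ⟨⟨x, y⟩, hxy⟩ ⟨⟨x', y'⟩, hxy'⟩
    have hxT : (x, y) ∉ T := by simpa using hxy
    have hxT' : (x', y') ∉ T := by simpa using hxy'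
    have hxS : x ∉ S := hmemS hxT
    have hxS' : x' ∉ S := hmemS hxT'
    obtain ⟨w⟩ := hconnS.preconnected ⟨x, by simpa using hxS⟩ ⟨x', by simpa using hxS'⟩
    exact key _ _ w y y' hxT hxT'
  · obtain ⟨y0, hy0⟩ := hsurv u hu'
    exact ⟨⟨(u, y0), by simpa using hy0⟩⟩

end Conn

section Spec
open Polynomial
lemma charpoly_units_conj' {γ : Type*} [Fintype γ] [DecidableEq γ]
    (U D V : Matrix γ γ ℝ) (hUV : U * V = 1) :
    (U * D * V).charpoly = D.charpoly := by
  have h1 : (U.map C) * (V.map C) = 1 := by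
    have := congrArg (fun M : Matrix γ γ ℝ => M.map (C : ℝ →+* ℝ[X])) hUV
    simpa [Matrix.map_mul] using this
  have key : charmatrix (U * D * V) = (U.map C) * charmatrix D * (V.map C) := by
    have hsc : Matrix.scalar γ (X : ℝ[X]) = (X : ℝ[X]) • (1 : Matrix γ γ ℝ[X]) := by
      ext i j
      by_cases h : i = j <;>
        simp [h, Matrix.scalar_apply, Matrix.smul_apply, Matrix.one_apply, Matrix.diagonal_apply]
    have hmap : (U * D * V).map (C : ℝ →+* ℝ[X]) = (U.map C) * (D.map C) * (V.map C) := by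
      simp [Matrix.map_mul]
    rw [charmatrix, charmatrix, RingHom.mapMatrix_apply, RingHom.mapMatrix_apply, hmap, hsc,
      mul_sub, sub_mul, mul_smul_comm, smul_mul_assoc, mul_one, h1]
  rw [Matrix.charpoly, key, Matrix.det_mul, Matrix.det_mul]
  rw [mul_comm ((U.map (C : ℝ →+* ℝ[X])).det * (charmatrix D).det) _, ← mul_assoc, mul_comm ((V.map (C : ℝ →+* ℝ[X])).det) _, ← Matrix.det_mul, h1]
  simp [Matrix.charpoly]

lemma charpoly_diagonal_real {γ : Type*} [Fintype γ] [DecidableEq γ] (d : γ → ℝ) :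
    (Matrix.diagonal d).charpoly = ∏ i, (X - C (d i)) := by
  rw [Matrix.charpoly]
  have : charmatrix (Matrix.diagonal d) = Matrix.diagonal (fun i => X - C (d i)) := by
    ext i j
    by_cases h : i = j
    · subst h; simp [charmatrix_apply_eq]
    · simp [charmatrix_apply_ne _ _ _ h, Matrix.diagonal_apply_ne _ h]
  rw [this, Matrix.det_diagonal]

lemma roots_charpoly_hermitian {γ : Type*} [Fintype γ] [DecidableEq γ]
    (A : Matrix γ γ ℝ) (hA : A.IsHermitian) :
    A.charpoly.roots = Multiset.map hA.eigenvalues Finset.univ.val := by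
  have hV := hA.spectral_theorem
  have hUU : (hA.eigenvectorUnitary : Matrix γ γ ℝ) * (star hA.eigenvectorUnitary : Matrix γ γ ℝ) = 1 := by
    exact (Matrix.mem_unitaryGroup_iff).mp hA.eigenvectorUnitary.2
  have hd : (Matrix.diagonal (RCLike.ofReal ∘ hA.eigenvalues) : Matrix γ γ ℝ)
      = Matrix.diagonal hA.eigenvalues := by
    simp [Function.comp]
  have : A.charpoly = (Matrix.diagonal hA.eigenvalues).charpoly := by
    conv_lhs => rw [hV]
    rw [← hd]
    exact charpoly_units_conj' _ _ _ hUU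
  rw [this, charpoly_diagonal_real]
  have : ∏ i, (X - C (hA.eigenvalues i)) =
      (Multiset.map (fun a => X - C a) (Multiset.map hA.eigenvalues Finset.univ.val)).prod := by
    rw [Multiset.map_map]
    rfl
  rw [this, Polynomial.roots_multiset_prod_X_sub_C]

end Spec

section Fiedler

lemma dot_sum' {γ : Type u} [Fintype γ] (x : γ → ℝ) (f : γ → γ → ℝ) :
    x ⬝ᵥ (∑ i, f i) = ∑ i, x ⬝ᵥ f i := by
  simp only [dotProduct, Finset.sum_apply, Finset.mul_sum]
  exact Finset.sum_comm

lemma mulVec_sum' {γ : Type u} [Fintype γ] (L : Matrix γ γ ℝ) (f : γ → γ → ℝ) :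
    L *ᵥ (∑ i, f i) = ∑ i, L *ᵥ f i := by
  funext v
  simp only [Matrix.mulVec, dotProduct, Finset.sum_apply, Finset.mul_sum]
  exact Finset.sum_comm

lemma inner_euclidean_real {γ : Type u} [Fintype γ] (y z : EuclideanSpace ℝ γ) :
    (inner ℝ y z : ℝ) = ∑ v, y v * z v := by
  rw [EuclideanSpace.inner_eq_star_dotProduct]
  simp [dotProduct, mul_comm]

lemma fiedler_bound {γ : Type u} [Fintype γ] [DecidableEq γ] (H : SimpleGraph γ)
    [DecidableRel H.Adj]
    (hconn : H.Connected) (hnc : H ≠ ⊤) (n : ℕ) (hn : Fintype.card γ = n)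
    (muH : Fin n → ℝ) (hanti : Antitone muH)
    (hspec : (Matrix.charpoly (H.lapMatrix ℝ)).roots = Multiset.map muH Finset.univ.val)
    (hn2 : 2 ≤ n) (hidx : n - 2 < n) :
    muH ⟨n - 2, hidx⟩ ≤ (vertConn H : ℝ) := by
  classical
  set L : Matrix γ γ ℝ := H.lapMatrix ℝ with hL
  have hPSD : L.PosSemidef := SimpleGraph.posSemidef_lapMatrix ℝ H
  have hHerm : L.IsHermitian := hPSD.1
  set lam : γ → ℝ := hHerm.eigenvalues with hlam
  set b := hHerm.eigenvectorBasis with hb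
  set μ : ℝ := muH ⟨n - 2, hidx⟩ with hmu
  have hNe : Nonempty γ := hconn.nonempty
  -- multiset equality
  have heq : Multiset.map muH Finset.univ.val = Multiset.map lam Finset.univ.val := by
    rw [← hspec, roots_charpoly_hermitian L hHerm]
  -- eigenvalues nonneg
  have hnonneg : ∀ i, 0 ≤ lam i := fun i => hPSD.eigenvalues_nonneg i
  have hmuH_nonneg : ∀ j, 0 ≤ muH j := by
    intro j
    have hmem : muH j ∈ Multiset.map muH Finset.univ.val :=
      Multiset.mem_map.mpr ⟨j, Finset.mem_univ_val j, rfl⟩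
    rw [heq] at hmem
    obtain ⟨i, _, hi⟩ := Multiset.mem_map.mp hmem
    exact hi ▸ hnonneg i
  -- zero eigenvectors are constant
  have hker : ∀ i, lam i = 0 → ∃ c : ℝ, c ≠ 0 ∧ ∀ v, b i v = c := by
    intro i hi
    have hz : L *ᵥ ⇑(b i) = 0 := by
      have := hHerm.mulVec_eigenvectorBasis i
      rw [← hlam, hi, zero_smul] at this
      exact this
    have hconst := (SimpleGraph.lapMatrix_mulVec_eq_zero_iff_forall_reachable H (x := ⇑(b i))).mp
      hz
    obtain ⟨v0⟩ := hNe
    refine ⟨b i v0, ?_, fun v => hconst v v0 (hconn.preconnected v v0)⟩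
    intro hc0
    apply b.orthonormal.ne_zero i
    have hall : ∀ v, b i v = 0 := fun v =>
      (hconst v v0 (hconn.preconnected v v0)).trans hc0
    exact PiLp.ext hall
  -- at most one zero eigenvalue
  have huniq : ∀ i j, lam i = 0 → lam j = 0 → i = j := by
    intro i j hi hj
    by_contra hij
    have horth := b.orthonormal.2 hij
    obtain ⟨ci, hci, hconsti⟩ := hker i hi
    obtain ⟨cj, hcj, hconstj⟩ := hker j hj
    have horth2 : ∑ v, b i v * b j v = 0 :=
      (inner_euclidean_real (b i) (b j)).symm.trans horth
    have hsum : ∑ v, (b i) v * (b j) v = ci * cj * Fintype.card γ := by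
      rw [Finset.sum_congr rfl (fun v _ => by rw [hconsti v, hconstj v])]
      simp [Finset.card_univ]
      ring
    rw [hsum] at horth2
    have hcard : (0:ℝ) < Fintype.card γ := by
      have : 0 < Fintype.card γ := Fintype.card_pos
      exact_mod_cast this
    rcases mul_eq_zero.mp horth2 with h | h
    · rcases mul_eq_zero.mp h with h' | h'
      · exact hci h'
      · exact hcj h'
    · exact absurd h (by positivity)
  -- zero is an eigenvalue
  have hzero : ∃ i, lam i = 0 := by
    have hdet : L.det = 0 := by
      rw [← Matrix.exists_mulVec_eq_zero_iff]
      refine ⟨fun _ => 1, ?_, SimpleGraph.lapMatrix_mulVec_const_eq_zero H⟩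
      intro h
      obtain ⟨v0⟩ := hNe
      exact one_ne_zero (congrFun h v0)
    have hprod := hHerm.det_eq_prod_eigenvalues
    rw [hdet] at hprod
    have := hprod.symm
    simp only [RCLike.ofReal_real_eq_id, id_eq] at this
    obtain ⟨i, _, hi⟩ := Finset.prod_eq_zero_iff.mp this
    exact ⟨i, hi⟩
  -- counting: at most one eigenvalue < μ
  have hcount : (Finset.univ.filter (fun i : γ => lam i < μ)).card ≤ 1 := by
    have h1 : Multiset.countP (fun r => r < μ) (Multiset.map lam Finset.univ.val)
        = Multiset.countP (fun r => r < μ) (Multiset.map muH Finset.univ.val) := by rw [heq]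
    rw [Multiset.countP_map, Multiset.countP_map] at h1
    have h2 : (Finset.univ.filter (fun i : γ => lam i < μ)).card
        = (Finset.univ.filter (fun j : Fin n => muH j < μ)).card := h1
    rw [h2]
    rw [Finset.card_le_one]
    intro j hj j' hj'
    rw [Finset.mem_filter] at hj hj'
    have hval : ∀ j'' : Fin n, muH j'' < μ → (j'' : ℕ) = n - 1 := by
      intro j'' hlt
      by_contra hne
      have hle : (j'' : ℕ) ≤ n - 2 := by
        have := j''.2
        omega
      have : μ ≤ muH j'' := hanti (by exact hle)
      linarith
    exact Fin.ext (by rw [hval j hj.2, hval j' hj'.2])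
  -- μ > 0
  have hmupos : 0 < μ := by
    rcases lt_or_ge 0 μ with h | h
    · exact h
    · exfalso
      have hlast : muH ⟨n - 1, by omega⟩ = 0 :=
        le_antisymm (le_trans (hanti (show (⟨n-2, hidx⟩ : Fin n) ≤ ⟨n-1, by omega⟩ by
          simp [Fin.le_def]; omega)) h) (hmuH_nonneg _)
      have hmu0 : μ = 0 := le_antisymm h (hmuH_nonneg _)
      -- two zeros among muH values ⇒ two zero eigenvalues
      have hcnt : 2 ≤ Multiset.countP (fun r => r = 0) (Multiset.map muH Finset.univ.val) := by
        rw [Multiset.countP_map]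
        have hsub : ({⟨n-2, hidx⟩, ⟨n-1, by omega⟩} : Finset (Fin n))
            ⊆ Finset.univ.filter (fun j : Fin n => muH j = 0) := by
          intro j hj
          rw [Finset.mem_insert, Finset.mem_singleton] at hj
          rcases hj with rfl | rfl
          · exact Finset.mem_filter.mpr ⟨Finset.mem_univ _, by rw [← hmu0]⟩
          · exact Finset.mem_filter.mpr ⟨Finset.mem_univ _, hlast⟩
        have hcard2 : ({⟨n-2, hidx⟩, ⟨n-1, by omega⟩} : Finset (Fin n)).card = 2 := by
          rw [Finset.card_insert_of_notMem, Finset.card_singleton]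
          simp only [Finset.mem_singleton]
          intro hc
          have := Fin.mk.injEq .. ▸ hc
          omega
        calc 2 = ({⟨n-2, hidx⟩, ⟨n-1, by omega⟩} : Finset (Fin n)).card := hcard2.symm
          _ ≤ (Finset.univ.filter (fun j : Fin n => muH j = 0)).card := Finset.card_le_card hsub
          _ = Multiset.card (Multiset.filter (fun a => muH a = 0) Finset.univ.val) := rfl
      rw [heq, Multiset.countP_map] at hcnt
      have h2z : 2 ≤ (Finset.univ.filter (fun i : γ => lam i = 0)).card := hcnt
      obtain ⟨i, hi, j, hj, hij⟩ := Finset.one_lt_card.mp (show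
        1 < (Finset.univ.filter (fun i : γ => lam i = 0)).card by omega)
      rw [Finset.mem_filter] at hi hj
      exact hij (huniq i j hi.2 hj.2)
  -- all nonzero eigenvalues are ≥ μ
  have hlam_ge : ∀ i, lam i ≠ 0 → μ ≤ lam i := by
    intro i hi
    by_contra hlt
    push_neg at hlt
    obtain ⟨i0, hi0⟩ := hzero
    have hii0 : i ≠ i0 := fun hc => hi (hc ▸ hi0)
    have : 1 < (Finset.univ.filter (fun i : γ => lam i < μ)).card := by
      apply Finset.one_lt_card.mpr
      exact ⟨i, Finset.mem_filter.mpr ⟨Finset.mem_univ _, hlt⟩,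
        i0, Finset.mem_filter.mpr ⟨Finset.mem_univ _, by rw [hi0]; exact hmupos⟩, hii0⟩
    omega
  -- realize the vertex connectivity by a cut
  have hmemvc : vertConn H ∈ {r | ∃ s : Finset γ, s.card = r ∧ ¬ (H.induce ((↑s : Set γ)ᶜ)).Connected} :=
    Nat.sInf_mem (vertConnSet_nonempty H)
  obtain ⟨s, hscard, hsncon⟩ := hmemvc
  have hle2 : vertConn H ≤ Fintype.card γ - 2 := vertConn_le_card_sub_two H hnc
  rw [SimpleGraph.connected_iff] at hsncon
  push_neg at hsncon
  have hnonempty : Nonempty (((↑s : Set γ)ᶜ : Set γ)) := by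
    have hcsd : (univ \ s).card = Fintype.card γ - s.card := by
      rw [Finset.card_sdiff_of_subset (Finset.subset_univ s), Finset.card_univ]
    have hpos : 0 < (univ \ s).card := by omega
    obtain ⟨z, hz⟩ := Finset.card_pos.mp hpos
    exact ⟨⟨z, by simpa using (Finset.mem_sdiff.mp hz).2⟩⟩
  have hnpre : ¬ (H.induce ((↑s : Set γ)ᶜ)).Preconnected := fun hp => (not_isEmpty_iff.mpr hnonempty) (hsncon hp)
  rw [SimpleGraph.Preconnected] at hnpre
  push_neg at hnpre
  obtain ⟨p, q, hpq⟩ := hnpre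
  set K := H.induce ((↑s : Set γ)ᶜ) with hK
  set A : Finset γ := univ.filter (fun z => ∃ h : z ∈ ((↑s : Set γ)ᶜ), K.Reachable p ⟨z, h⟩) with hA
  set B : Finset γ := univ.filter (fun z => ∃ h : z ∈ ((↑s : Set γ)ᶜ), ¬ K.Reachable p ⟨z, h⟩) with hB
  have hAB : ∀ z, z ∈ A → z ∈ B → False := by
    intro z hzA hzB
    obtain ⟨h1, hr⟩ := (Finset.mem_filter.mp hzA).2
    obtain ⟨h2, hnr⟩ := (Finset.mem_filter.mp hzB).2
    exact hnr hr
  have hpA : (p : γ) ∈ A :=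
    Finset.mem_filter.mpr ⟨Finset.mem_univ _, ⟨p.2, SimpleGraph.Reachable.refl _⟩⟩
  have hqB : (q : γ) ∈ B :=
    Finset.mem_filter.mpr ⟨Finset.mem_univ _, ⟨q.2, fun hr => hpq hr⟩⟩
  set a : ℕ := A.card with ha
  set bb : ℕ := B.card with hbb
  have hapos : 0 < a := Finset.card_pos.mpr ⟨_, hpA⟩
  have hbpos : 0 < bb := Finset.card_pos.mpr ⟨_, hqB⟩
  have htri : ∀ z : γ, z ∉ s → (z ∈ A ∨ z ∈ B) := by
    intro z hz
    by_cases hr : K.Reachable p ⟨z, by simpa using hz⟩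
    · exact Or.inl (Finset.mem_filter.mpr ⟨Finset.mem_univ _, ⟨by simpa using hz, hr⟩⟩)
    · exact Or.inr (Finset.mem_filter.mpr ⟨Finset.mem_univ _, ⟨by simpa using hz, hr⟩⟩)
  have hsA : ∀ z, z ∈ s → z ∉ A := by
    intro z hz hzA
    obtain ⟨h1, _⟩ := (Finset.mem_filter.mp hzA).2
    simp only [Set.mem_compl_iff, Finset.mem_coe] at h1
    exact h1 hz
  have hsB : ∀ z, z ∈ s → z ∉ B := by
    intro z hz hzB
    obtain ⟨h1, _⟩ := (Finset.mem_filter.mp hzB).2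
    simp only [Set.mem_compl_iff, Finset.mem_coe] at h1
    exact h1 hz
  set x : γ → ℝ := fun z => if z ∈ A then (bb : ℝ) else if z ∈ B then -(a : ℝ) else 0 with hx
  have hxA : ∀ z, z ∈ A → x z = (bb : ℝ) := fun z hz => by simp [hx, hz]
  have hxB : ∀ z, z ∈ B → x z = -(a : ℝ) := by
    intro z hz
    have hzA : z ∉ A := fun h => hAB z h hz
    simp [hx, hzA, hz]
  have hxs : ∀ z, z ∈ s → x z = 0 := by
    intro z hz
    simp [hx, hsA z hz, hsB z hz]
  have hxsplit : ∀ z, x z = (if z ∈ A then (bb:ℝ) else 0) + (if z ∈ B then -(a:ℝ) else 0) := by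
    intro z
    by_cases h1 : z ∈ A
    · have h2 : z ∉ B := fun h => hAB z h1 h
      simp [hx, h1, h2]
    · by_cases h2 : z ∈ B <;> simp [hx, h1, h2]
  have hsum : ∑ z, x z = 0 := by
    rw [Finset.sum_congr rfl (fun z _ => hxsplit z), Finset.sum_add_distrib,
      Finset.sum_ite_mem, Finset.sum_ite_mem, Finset.univ_inter, Finset.univ_inter,
      Finset.sum_const, Finset.sum_const, ← ha, ← hbb]
    simp only [nsmul_eq_mul]
    try ring
  set S2 : ℝ := ∑ z, x z * x z with hS2def
  have hxsq : ∀ z, x z * x z = (if z ∈ A then ((bb:ℝ) * bb) else 0) + (if z ∈ B then ((a:ℝ) * a) else 0) := by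
    intro z
    by_cases h1 : z ∈ A
    · have h2 : z ∉ B := fun h => hAB z h1 h
      simp [hx, h1, h2]
    · by_cases h2 : z ∈ B <;> simp [hx, h1, h2]
  have hS2 : S2 = (a : ℝ) * (bb * bb) + (bb : ℝ) * (a * a) := by
    rw [hS2def, Finset.sum_congr rfl (fun z _ => hxsq z), Finset.sum_add_distrib,
      Finset.sum_ite_mem, Finset.sum_ite_mem, Finset.univ_inter, Finset.univ_inter,
      Finset.sum_const, Finset.sum_const, ← ha, ← hbb]
    simp only [nsmul_eq_mul]
    try ring
  have hS2pos : 0 < S2 := by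
    rw [hS2]
    have h1 : (1:ℝ) ≤ a := by exact_mod_cast hapos
    have h2 : (1:ℝ) ≤ bb := by exact_mod_cast hbpos
    nlinarith
  have hnoAB : ∀ z z', z ∈ A → z' ∈ B → ¬ H.Adj z z' := by
    intro z z' hzA hzB hadj
    obtain ⟨h1, hr⟩ := (Finset.mem_filter.mp hzA).2
    obtain ⟨h2, hnr⟩ := (Finset.mem_filter.mp hzB).2
    refine hnr (hr.trans (SimpleGraph.Adj.reachable ?_))
    show K.Adj ⟨z, h1⟩ ⟨z', h2⟩
    simpa [hK, SimpleGraph.comap_adj] using hadj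
  -- pointwise bound
  have hpt : ∀ i j, (if H.Adj i j then (x i - x j)^2 else 0)
      ≤ (if i ∈ s then x j * x j else 0) + (if j ∈ s then x i * x i else 0) := by
    intro i j
    have hnn1 : (0:ℝ) ≤ if i ∈ s then x j * x j else 0 := by
      split
      · exact mul_self_nonneg _
      · exact le_refl _
    have hnn2 : (0:ℝ) ≤ if j ∈ s then x i * x i else 0 := by
      split
      · exact mul_self_nonneg _
      · exact le_refl _
    by_cases hadj : H.Adj i j
    · rw [if_pos hadj]
      by_cases hi : i ∈ s
      · have key : (x i - x j)^2 = x j * x j := by rw [hxs i hi]; ring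
        rw [if_pos hi, key]
        linarith
      · by_cases hj : j ∈ s
        · have key : (x i - x j)^2 = x i * x i := by rw [hxs j hj]; ring
          rw [if_pos hj, key]
          linarith
        · have hij : x i = x j := by
            rcases htri i hi with h1 | h1 <;> rcases htri j hj with h2 | h2
            · rw [hxA i h1, hxA j h2]
            · exact absurd hadj (hnoAB i j h1 h2)
            · exact absurd hadj.symm (hnoAB j i h2 h1)
            · rw [hxB i h1, hxB j h2]
          have key : (x i - x j)^2 = 0 := by rw [hij]; ring
          rw [key]
          linarith
    · rw [if_neg hadj]
      linarith
  have hqf : (∑ i, ∑ j, if H.Adj i j then (x i - x j)^2 else 0) ≤ 2 * s.card * S2 := by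
    have step1 : (∑ i, ∑ j, if H.Adj i j then (x i - x j)^2 else 0)
        ≤ ∑ i, ∑ j, ((if i ∈ s then x j * x j else 0) + (if j ∈ s then x i * x i else 0)) :=
      Finset.sum_le_sum (fun i _ => Finset.sum_le_sum (fun j _ => hpt i j))
    have step2 : (∑ i, ∑ j : γ, ((if i ∈ s then x j * x j else 0) + (if j ∈ s then x i * x i else 0)))
        = (s.card : ℝ) * S2 + (s.card : ℝ) * S2 := by
      rw [Finset.sum_congr rfl (fun i _ => Finset.sum_add_distrib)]
      rw [Finset.sum_add_distrib]
      congr 1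
      · have hin : ∀ i : γ, (∑ j, if i ∈ s then x j * x j else 0) = if i ∈ s then S2 else 0 := by
          intro i
          split <;> simp [hS2def]
        rw [Finset.sum_congr rfl (fun i _ => hin i), Finset.sum_ite_mem, Finset.univ_inter,
          Finset.sum_const, nsmul_eq_mul]
      · have hin : ∀ i : γ, (∑ j, if j ∈ s then x i * x i else 0) = s.card * (x i * x i) := by
          intro i
          rw [Finset.sum_ite_mem, Finset.univ_inter, Finset.sum_const, nsmul_eq_mul]
        rw [Finset.sum_congr rfl (fun i _ => hin i), ← Finset.mul_sum, ← hS2def]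
    calc (∑ i, ∑ j, if H.Adj i j then (x i - x j)^2 else 0)
        ≤ (s.card : ℝ) * S2 + (s.card : ℝ) * S2 := step2 ▸ step1
      _ = 2 * s.card * S2 := by ring
  -- Rayleigh quotient
  set X : EuclideanSpace ℝ γ := (WithLp.equiv 2 (γ → ℝ)).symm x with hX
  set c : γ → ℝ := fun i => b.repr X i with hc
  have hXv : ∀ v, X v = x v := fun v => rfl
  have hc_eq : ∀ i, (∑ v, x v * b i v) = c i := by
    intro i
    have h0 : c i = (inner ℝ (b i) X : ℝ) := b.repr_apply_apply X i
    rw [h0, inner_euclidean_real]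
    refine Finset.sum_congr rfl (fun v _ => ?_)
    rw [hXv v]
    exact mul_comm _ _
  have hx_expand : x = ∑ i, c i • ⇑(b i) := by
    have h := b.sum_repr X
    funext v
    have e1 : X v = ∑ i, c i * b i v := by
      conv_lhs => rw [← h]
      rw [show ((∑ i, b.repr X i • b i : EuclideanSpace ℝ γ) v)
          = ∑ i, (b.repr X i • b i : EuclideanSpace ℝ γ) v from by rw [WithLp.ofLp_sum]; exact Finset.sum_apply _ _ _]
      exact Finset.sum_congr rfl (fun i _ => by rw [PiLp.smul_apply, smul_eq_mul])
    have e2 : (∑ i, c i • ⇑(b i)) v = ∑ i, c i * (b i v) := by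
      rw [Finset.sum_apply]
      exact Finset.sum_congr rfl (fun i _ => by rw [Pi.smul_apply, smul_eq_mul])
    rw [e2, ← e1]
    exact (hXv v).symm
  have hLx : L *ᵥ x = ∑ i, (c i * lam i) • ⇑(b i) := by
    conv_lhs => rw [hx_expand]
    rw [mulVec_sum' L (fun i => c i • ⇑(b i))]
    refine Finset.sum_congr rfl (fun i _ => ?_)
    rw [Matrix.mulVec_smul, hHerm.mulVec_eigenvectorBasis i, smul_smul]
  have hdot : x ⬝ᵥ (L *ᵥ x) = ∑ i, lam i * (c i * c i) := by
    rw [hLx, dot_sum' x (fun i => (c i * lam i) • ⇑(b i))]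
    refine Finset.sum_congr rfl (fun i _ => ?_)
    rw [dotProduct_smul]
    have : x ⬝ᵥ ⇑(b i) = c i := by
      rw [← hc_eq i]
      rfl
    rw [this, smul_eq_mul]
    ring
  have hparseval : (∑ i, c i * c i) = S2 := by
    have h1 : (inner ℝ X X : ℝ) = S2 := by
      rw [inner_euclidean_real, hS2def]
      exact Finset.sum_congr rfl (fun v _ => by rw [hXv v])
    have h2 : (inner ℝ (b.repr X) (b.repr X) : ℝ) = (inner ℝ X X : ℝ) := b.repr.inner_map_map X X
    have h3 : (inner ℝ (b.repr X) (b.repr X) : ℝ) = ∑ i, c i * c i := by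
      rw [inner_euclidean_real]
    rw [← h3, h2, h1]
  have hczero : ∀ i, lam i = 0 → c i = 0 := by
    intro i hi
    obtain ⟨c', hc'0, hconst⟩ := hker i hi
    rw [← hc_eq i]
    rw [Finset.sum_congr rfl (fun v _ => by rw [hconst v])]
    rw [← Finset.sum_mul, hsum, zero_mul]
  have htermwise : ∀ i, μ * (c i * c i) ≤ lam i * (c i * c i) := by
    intro i
    by_cases hi : lam i = 0
    · rw [hczero i hi, hi]
      ring_nf
      exact le_refl _
    · exact mul_le_mul_of_nonneg_right (hlam_ge i hi) (mul_self_nonneg _)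
  have hchain : μ * S2 ≤ (s.card : ℝ) * S2 := by
    have h1 : μ * S2 ≤ ∑ i, lam i * (c i * c i) := by
      rw [← hparseval, Finset.mul_sum]
      exact Finset.sum_le_sum (fun i _ => htermwise i)
    have h2 : x ⬝ᵥ (L *ᵥ x)
        = (∑ i, ∑ j, if H.Adj i j then (x i - x j)^2 else 0) / 2 := by
      rw [← Matrix.toLinearMap₂'_apply']
      exact SimpleGraph.lapMatrix_toLinearMap₂' (G := H) (R := ℝ) x
    have h3 : (∑ i, lam i * (c i * c i)) ≤ (s.card : ℝ) * S2 := by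
      rw [← hdot, h2]
      linarith
    linarith
  have hfin : μ ≤ (s.card : ℝ) := le_of_mul_le_mul_right hchain hS2pos
  rw [hscard] at hfin
  exact hfin

end Fiedler

section Assemble
variable {α : Type u} [Fintype α]

lemma vertConn_lexPow_lower [Nonempty α] (H : SimpleGraph α) (hnc : H ≠ ⊤) (k : ℕ) (hk : 1 ≤ k) :
    Fintype.card α ^ (k - 1) * vertConn H ≤ vertConn (lexPow H k) := by
  induction k, hk using Nat.le_induction with
  | base =>
    show 1 * vertConn H ≤ vertConn (lexPow H 1)
    rw [one_mul]
    exact le_refl _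
  | succ k hk ih =>
    obtain ⟨m, rfl⟩ : ∃ m, k = m + 1 := ⟨k - 1, by omega⟩
    have hstep := mul_vertConn_le_vertConn_lexProd (lexPow H (m + 1)) H
      (lexPow_ne_top H hnc (m + 1) (by omega))
    have heq : vertConn (lexPow H (m + 2)) = vertConn (lexProd (lexPow H (m + 1)) H) := rfl
    have h1 : Fintype.card α ^ (m + 1 + 1 - 1) * vertConn H
        = Fintype.card α * (Fintype.card α ^ (m + 1 - 1) * vertConn H) := by
      show Fintype.card α ^ (m + 1) * vertConn H = Fintype.card α * (Fintype.card α ^ m * vertConn H)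
      rw [pow_succ]
      ring
    rw [h1]
    calc Fintype.card α * (Fintype.card α ^ (m + 1 - 1) * vertConn H)
        ≤ Fintype.card α * vertConn (lexPow H (m + 1)) := Nat.mul_le_mul_left _ ih
      _ ≤ vertConn (lexPow H (m + 2)) := by rw [heq]; exact hstep

lemma lapSpectrum_eq (H : SimpleGraph α) [DecidableEq α] [DecidableRel H.Adj] :
    lapSpectrum H = (Matrix.charpoly (H.lapMatrix ℝ)).roots := by
  unfold lapSpectrum
  congr!

end Assemble

/-- For a connected non-complete graph `H` of order `n` with Laplacian
eigenvalues `μ_1(H) ≥ … ≥ μ_n(H)`, the vertex connectivity of `H^k` satisfies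
`n^(k-1)·μ_{n-1}(H) ≤ υ(H^k) ≤ δ(H)·(n^k - 1)/(n - 1)` (the natural division being
exact). -/
theorem vertConn_lexPow_bounds {α : Type u} [Fintype α]
    (H : SimpleGraph α) (n : ℕ) (hn : Fintype.card α = n)
    (hconn : H.Connected) (hnc : H ≠ ⊤)
    (muH : Fin n → ℝ) (hanti : Antitone muH)
    (hspec : lapSpectrum H = Multiset.map muH Finset.univ.val) :
    ∀ k : ℕ, 1 ≤ k →
      (n : ℝ) ^ (k - 1) *
          muH ⟨n - 2, by
            have h0 : 0 < n := hn ▸ Fintype.card_pos_iff.mpr hconn.nonempty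
            omega⟩
        ≤ (vertConn (lexPow H k) : ℝ) ∧
      (vertConn (lexPow H k) : ℝ) ≤ ((minDeg H * ((n ^ k - 1) / (n - 1)) : ℕ) : ℝ) := by
  classical
  intro k hk
  haveI hNe : Nonempty α := hconn.nonempty
  have hn0 : 0 < n := hn ▸ Fintype.card_pos
  have hn2 : 2 ≤ n := by
    by_contra h
    apply hnc
    have hcard : Fintype.card α ≤ 1 := by omega
    have hsub := Fintype.card_le_one_iff.mp hcard
    ext v w
    simp only [SimpleGraph.top_adj]
    constructor
    · intro h'; exact fun hvw => H.loopless.irrefl v (hvw ▸ h')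
    · intro h'; exact absurd (hsub v w) h'
  have hspec' : (Matrix.charpoly (H.lapMatrix ℝ)).roots = Multiset.map muH Finset.univ.val := by
    rw [← hspec, lapSpectrum_eq H]
  have hidx : n - 2 < n := by omega
  have hmu : muH ⟨n - 2, hidx⟩ ≤ (vertConn H : ℝ) :=
    fiedler_bound H hconn hnc n hn muH hanti hspec' hn2 hidx
  constructor
  · -- lower bound
    have hrec : Fintype.card α ^ (k - 1) * vertConn H ≤ vertConn (lexPow H k) :=
      vertConn_lexPow_lower H hnc k hk
    rw [hn] at hrec
    calc (n : ℝ) ^ (k - 1) * muH ⟨n - 2, _⟩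
        ≤ (n : ℝ) ^ (k - 1) * (vertConn H : ℝ) := by
          apply mul_le_mul_of_nonneg_left hmu (by positivity)
      _ ≤ (vertConn (lexPow H k) : ℝ) := by exact_mod_cast hrec
  · -- upper bound
    have h1 : vertConn (lexPow H k) ≤ minDeg (lexPow H k) :=
      vertConn_le_minDeg _ (powVert_nonempty k) (lexPow_ne_top H hnc k hk)
    have h2 : minDeg (lexPow H k) = minDeg H * ((n ^ k - 1) / (n - 1)) := by
      rw [minDeg_lexPow H k hk, hn, geom_sum_nat n hn2 k]
    exact_mod_cast h1.trans_eq h2
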